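/- Define h_n(α,β,c) = 2(c²-1)^n (n/2)! ((α+1)/2)_{n/2} ((β+1)/2)_{n/2} / [((α+β)/2+1)_n ((α+β+n)/2+1)_{n/2}] for n even, and h_n(α,β,c) = 2(c-1)^{n-1}(c+1)^{n+1} ((n-1)/2)! ((α+1)/2)_{(n+1)/2} ((β+1)/2)_{(n+1)/2} / [((α+β)/2+1)_n ((α+β+n+1)/2)_{(n+1)/2}] for n odd. With u_n(α,β,c) = (c-1)² n (α+β+n)/(α+β+2n)² for n even and u_n(α,β,c) = (c+1)²(α+n)(β+n)/(α+β+2n)² for n odd, one has h_n(α,β,c) = u_n(α,β,c) · h_{n-1}(α,β,c) for all n ≥ 1 (whenever all quantities are defined). -/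

import Mathlib

set_option maxHeartbeats 1000000


open Polynomial Finset

/-- Pochhammer (shifted factorial) symbol `(a)_k = a(a+1)⋯(a+k-1)`. -/
noncomputable def poch (a : ℂ) (k : ℕ) : ℂ := (ascPochhammer ℂ k).eval a

/-- Squared norms `h_n(α,β,c)` of the monic big `-1` Jacobi polynomials
(normalized by `⟨u,1⟩ = 1`). -/
noncomputable def hnorm (α β c : ℂ) (n : ℕ) : ℂ :=
  if Even n then
    2 * (c ^ 2 - 1) ^ n * ((n / 2).factorial : ℂ)
      * poch ((α + 1) / 2) (n / 2) * poch ((β + 1) / 2) (n / 2)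
      / (poch ((α + β) / 2 + 1) n * poch ((α + β + n) / 2 + 1) (n / 2))
  else
    2 * (c - 1) ^ (n - 1) * (c + 1) ^ (n + 1) * (((n - 1) / 2).factorial : ℂ)
      * poch ((α + 1) / 2) ((n + 1) / 2) * poch ((β + 1) / 2) ((n + 1) / 2)
      / (poch ((α + β) / 2 + 1) n * poch ((α + β + n + 1) / 2) ((n + 1) / 2))

/-- Subdiagonal recurrence coefficient `u_n(α,β,c)` of the monic big `-1` Jacobi polynomials. -/
noncomputable def ucoef (α β c : ℂ) (n : ℕ) : ℂ :=
  if Even n then (c - 1) ^ 2 * n * (α + β + n) / (α + β + 2 * n) ^ 2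
  else (c + 1) ^ 2 * (α + n) * (β + n) / (α + β + 2 * n) ^ 2

/-- Denominator of the norm formula `h_n(α,β,c)`. -/
noncomputable def hnormDenom (α β : ℂ) (n : ℕ) : ℂ :=
  if Even n then poch ((α + β) / 2 + 1) n * poch ((α + β + n) / 2 + 1) (n / 2)
  else poch ((α + β) / 2 + 1) n * poch ((α + β + n + 1) / 2) ((n + 1) / 2)


lemma poch_succ (a : ℂ) (k : ℕ) : poch a (k+1) = poch a k * (a + k) := by
  simp [poch, ascPochhammer_succ_right]

lemma poch_succ_left (a : ℂ) (k : ℕ) : poch a (k+1) = a * poch (a+1) k := by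
  simp [poch, ascPochhammer_succ_left, eval_comp]

lemma poch_shift (a : ℂ) (k : ℕ) : a * poch (a+1) k = poch a k * (a + k) := by
  rw [← poch_succ_left, poch_succ]

/-- The explicit squared norms satisfy `h_n = u_n h_{n-1}` whenever all quantities are
defined. -/
theorem hnorm_recurrence (α β c : ℂ) (n : ℕ) (hn : 1 ≤ n)
    (hd1 : hnormDenom α β n ≠ 0) (hd2 : hnormDenom α β (n - 1) ≠ 0)
    (hd3 : α + β + 2 * n ≠ 0) :
    hnorm α β c n = ucoef α β c n * hnorm α β c (n - 1) := by
  rcases Nat.even_or_odd n with he | ho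
  · -- n even, n = 2k+2
    obtain ⟨k, hk⟩ : ∃ k, n = 2*k+2 := by
      obtain ⟨m, hm⟩ := he; exact ⟨m-1, by omega⟩
    subst hk
    simp only [hnorm, ucoef, hnormDenom, show 2*k+2-1 = 2*k+1 from by omega,
      if_pos (Nat.even_iff.mpr (by omega) : Even (2*k+2)),
      if_neg (by rw [Nat.even_iff]; omega : ¬ Even (2*k+1)),
      show (2*k+2)/2 = k+1 from by omega,
      show 2*k+1-1 = 2*k from by omega, show (2*k+1+1)/2 = k+1 from by omega,
      show (2*k)/2 = k from by omega] at *
    push_cast [Nat.factorial_succ] at *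
    obtain ⟨hQ, hS⟩ := mul_ne_zero_iff.mp hd2
    have hs : (α + β + (2 * (k:ℂ) + 1) + 1) / 2 ≠ 0 := fun h => hS (by
      rw [poch_succ_left, h, zero_mul])
    rw [show (α + β + (2 * (k:ℂ) + 2)) / 2 + 1 = (α + β + (2 * (k:ℂ) + 1) + 1) / 2 + 1 from
        by ring] at hd1 ⊢
    rw [show (2*k+2 : ℕ) = (2*k+1)+1 from rfl, poch_succ ((α+β)/2+1) (2*k+1)] at hd1 ⊢
    obtain ⟨⟨_, hq2c⟩, hT0⟩ :
        (poch ((α+β)/2+1) (2*k+1) ≠ 0 ∧ ((α+β)/2+1+((2*k+1:ℕ):ℂ)) ≠ 0)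
          ∧ poch ((α + β + (2 * (k:ℂ) + 1) + 1) / 2 + 1) (k+1) ≠ 0 := by
      rw [← mul_ne_zero_iff, ← mul_ne_zero_iff]; exact hd1
    have hv : (α + β + 2 * (2 * (k:ℂ) + 2)) ≠ 0 := by push_cast at hd3; exact hd3
    have hrel := poch_shift ((α + β + (2 * (k:ℂ) + 1) + 1) / 2) (k+1)
    rw [show ((c:ℂ)^2-1)^(2*k+1+1) = (c-1)^(2*k)*(c+1)^(2*k)*((c-1)*(c+1))^2 from by
        rw [show ((c:ℂ)^2-1) = (c-1)*(c+1) from by ring, mul_pow]; ring]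
    rw [div_mul_div_comm,
      div_eq_div_iff (mul_ne_zero (mul_ne_zero hQ hq2c) hT0)
        (mul_ne_zero (pow_ne_zero 2 hv) (mul_ne_zero hQ hS))]
    apply mul_left_cancel₀ hs
    linear_combination (norm := (push_cast; ring1))
      (-((c - 1) ^ 2 * (2 * (k:ℂ) + 2) * (α + β + (2 * (k:ℂ) + 2)) *
        (2 * (c - 1) ^ (2 * k) * (c + 1) ^ (2 * k + 1 + 1) * (k.factorial:ℂ) *
          poch ((α + 1) / 2) (k + 1) * poch ((β + 1) / 2) (k + 1)) *
        (poch ((α + β) / 2 + 1) (2 * k + 1) *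
          ((α + β) / 2 + 1 + ((2 * k + 1 : ℕ):ℂ))))) * hrel
  · obtain ⟨k, hk⟩ := ho
    subst hk
    simp only [hnorm, ucoef, hnormDenom, show 2*k+1-1 = 2*k from by omega,
      if_neg (by rw [Nat.even_iff]; omega : ¬ Even (2*k+1)),
      if_pos (Nat.even_iff.mpr (by omega) : Even (2*k)),
      show (2*k+1+1)/2 = k+1 from by omega,
      show (2*k)/2 = k from by omega] at *
    push_cast at *
    obtain ⟨hQ, hS⟩ := mul_ne_zero_iff.mp hd2
    have h1 : (α + β) / 2 + 1 + (2*(k:ℂ)) ≠ 0 := by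
      intro h; apply hd3; linear_combination 2*h
    have h2 : (α + β + 2*(k:ℂ)) / 2 + 1 + k ≠ 0 := by
      intro h; apply hd3; linear_combination 2*h
    rw [show (α + β + (2 * (k:ℂ) + 1) + 1) / 2 = (α + β + 2*(k:ℂ))/2 + 1 from by ring,
      poch_succ ((α+β+2*(k:ℂ))/2+1) k,
      poch_succ ((α+1)/2) k, poch_succ ((β+1)/2) k,
      show (2*k+1 : ℕ) = (2*k)+1 from rfl, poch_succ ((α+β)/2+1) (2*k),
      show ((c:ℂ)^2-1)^(2*k) = (c-1)^(2*k)*(c+1)^(2*k) from by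
        rw [show ((c:ℂ)^2-1) = (c-1)*(c+1) from by ring, mul_pow]]
    push_cast
    rw [div_mul_div_comm, div_eq_div_iff (mul_ne_zero (mul_ne_zero hQ h1) (mul_ne_zero hS h2))
      (mul_ne_zero (pow_ne_zero 2 hd3) (mul_ne_zero hQ hS))]
    ring
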